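/- Let μ be a probability measure on (E,𝓔), where E is a measurable abelian group with measurable negation, and let κ(x,v) = (x,−v) on E². Let Φ : E² → E² be a (μ⊗μ,κ)-reversible transform. Let Π(dx) = exp(−U(x))μ(dx) and λ(dv) = exp(−K(v))μ(dv) be probability measures with K(v) = K(−v), and set H(x,v) = U(x) + K(v). Then the augmented Metropolis–Hastings kernel P(x,A) = δ_x(A)(1 − ∫_E λ(dv) α((x,v),Φ(x,v))) + ∫_E 1{Φ(x,v) ∈ A×E} λ(dv) α((x,v),Φ(x,v)), with acceptance probability α(z,z') = min{1, exp(−H(z') + H(z))}, is a Π-reversible Markov kernel on (E,𝓔). -/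

import Mathlib

open MeasureTheory
open scoped ENNReal

/-- A transform `Φ` is `μ`-reversible if `μ(A ∩ Φ⁻¹(B)) = μ(B ∩ Φ⁻¹(A))` for all
measurable `A`, `B`. -/
def MeasRev {E : Type*} [MeasurableSpace E] (μ : Measure E) (Φ : E → E) : Prop :=
  ∀ A B : Set E, MeasurableSet A → MeasurableSet B → μ (A ∩ Φ ⁻¹' B) = μ (B ∩ Φ ⁻¹' A)

/-- A transform `Φ` is `(μ,κ)`-reversible if `κ ∘ Φ` is `μ`-reversible. -/
def FlipRev {E : Type*} [MeasurableSpace E] (μ : Measure E) (κ Φ : E → E) : Prop :=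
  MeasRev μ (κ ∘ Φ)

lemma lintegral_rev_symm {X : Type*} [MeasurableSpace X] (ν : Measure X) [IsFiniteMeasure ν]
    (Ψ : X → X) (hΨ : Measurable Ψ) (hrev : MeasRev ν Ψ)
    (F : X × X → ℝ≥0∞) (hF : Measurable F) :
    ∫⁻ z, F (z, Ψ z) ∂ν = ∫⁻ z, F (Ψ z, z) ∂ν := by
  have hpair : Measurable fun z => (z, Ψ z) := measurable_id.prodMk hΨ
  set γ : Measure (X × X) := ν.map (fun z => (z, Ψ z)) with hγ
  have hfin : IsFiniteMeasure γ := by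
    constructor
    rw [hγ, Measure.map_apply hpair MeasurableSet.univ]
    exact measure_lt_top ν _
  have hswap : γ.map Prod.swap = γ := by
    refine ext_of_generate_finite _ generateFrom_prod.symm isPiSystem_prod ?_ ?_
    · rintro s ⟨A, hA, B, hB, rfl⟩
      rw [Measure.map_apply measurable_swap (hA.prod hB), hγ,
        Measure.map_apply hpair ((hA.prod hB).preimage measurable_swap),
        Measure.map_apply hpair (hA.prod hB)]
      have h1 : (fun z => (z, Ψ z)) ⁻¹' (Prod.swap ⁻¹' A ×ˢ B) = B ∩ Ψ ⁻¹' A := by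
        ext z; simp [Set.mem_inter_iff, and_comm]
      have h2 : (fun z => (z, Ψ z)) ⁻¹' (A ×ˢ B) = A ∩ Ψ ⁻¹' B := by
        ext z; simp [Set.mem_inter_iff]
      rw [h1, h2, hrev B A hB hA]
    · rw [Measure.map_apply measurable_swap MeasurableSet.univ]
      simp
  calc ∫⁻ z, F (z, Ψ z) ∂ν = ∫⁻ p, F p ∂γ := (lintegral_map hF hpair).symm
    _ = ∫⁻ p, F p ∂(γ.map Prod.swap) := by rw [hswap]
    _ = ∫⁻ p, F (Prod.swap p) ∂γ := lintegral_map hF measurable_swap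
    _ = ∫⁻ z, F (Ψ z, z) ∂ν := lintegral_map (hF.comp measurable_swap) hpair

/-- The augmented Metropolis--Hastings kernel built from a `(μ⊗μ,κ)`-reversible transform
`Φ` (with `κ(x,v) = (x,-v)`) is a `Π`-reversible Markov kernel. -/
theorem stmt_6 {E : Type*} [MeasurableSpace E] [AddCommGroup E] [MeasurableNeg E]
    (μ : Measure E) [IsProbabilityMeasure μ]
    (Φ : E × E → E × E) (hΦ_meas : Measurable Φ) (hΦ_bij : Function.Bijective Φ)
    (hΦ : FlipRev (μ.prod μ) (fun z : E × E => (z.1, -z.2)) Φ)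
    (U K : E → ℝ) (hU_meas : Measurable U) (hK_meas : Measurable K)
    (hK_even : ∀ v : E, K (-v) = K v)
    (Ppi lam : Measure E)
    (hPpi : Ppi = μ.withDensity fun x => ENNReal.ofReal (Real.exp (-U x)))
    (hlam : lam = μ.withDensity fun v => ENNReal.ofReal (Real.exp (-K v)))
    [IsProbabilityMeasure Ppi] [IsProbabilityMeasure lam] :
    -- the Hamiltonian
    let H : E × E → ℝ := fun z => U z.1 + K z.2
    -- the acceptance probability
    let α : E × E → E × E → ℝ≥0∞ := fun z z' =>
      ENNReal.ofReal (min 1 (Real.exp (-H z' + H z)))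
    -- the augmented Metropolis--Hastings kernel
    let P : E → Set E → ℝ≥0∞ := fun x A =>
      A.indicator (fun _ => (1:ℝ≥0∞)) x * (1 - ∫⁻ v, α (x, v) (Φ (x, v)) ∂lam)
        + ∫⁻ v, {w : E | (Φ (x, w)).1 ∈ A}.indicator (fun w => α (x, w) (Φ (x, w))) v ∂lam
    -- `P` is a Markov kernel which is `Π`-reversible
    (∀ x : E, P x Set.univ = 1) ∧
      ∀ A B : Set E, MeasurableSet A → MeasurableSet B →
        ∫⁻ x in A, P x B ∂Ppi = ∫⁻ x in B, P x A ∂Ppi := by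
  intro H α P
  have hH : Measurable H := (hU_meas.comp measurable_fst).add (hK_meas.comp measurable_snd)
  have hαΦ : Measurable fun z : E × E => α z (Φ z) := by
    apply ENNReal.measurable_ofReal.comp
    exact measurable_const.min (((hH.comp hΦ_meas).neg.add hH).exp)
  have hα_le : ∀ z : E × E, α z (Φ z) ≤ 1 := by
    intro z
    simp only [α]
    calc ENNReal.ofReal (min 1 (Real.exp (-H (Φ z) + H z))) ≤ ENNReal.ofReal 1 :=
      ENNReal.ofReal_le_ofReal (min_le_left _ _)
    _ = 1 := ENNReal.ofReal_one
  have h_r_le : ∀ x : E, (∫⁻ v, α (x, v) (Φ (x, v)) ∂lam) ≤ 1 := by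
    intro x
    calc (∫⁻ v, α (x, v) (Φ (x, v)) ∂lam) ≤ ∫⁻ _, 1 ∂lam := lintegral_mono fun v => hα_le _
    _ = 1 := by simp
  constructor
  · intro x
    have h1 : {w : E | (Φ (x, w)).1 ∈ (Set.univ : Set E)} = Set.univ := by simp
    simp only [P, h1, Set.indicator_univ, one_mul]
    exact tsub_add_cancel_of_le (h_r_le x)
  · intro A B hA hB
    -- notation
    set eU : E → ℝ≥0∞ := fun x => ENNReal.ofReal (Real.exp (-U x)) with heU
    set eK : E → ℝ≥0∞ := fun v => ENNReal.ofReal (Real.exp (-K v)) with heK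
    have heU_meas : Measurable eU := ENNReal.measurable_ofReal.comp hU_meas.neg.exp
    have heK_meas : Measurable eK := ENNReal.measurable_ofReal.comp hK_meas.neg.exp
    set r : E → ℝ≥0∞ := fun x => ∫⁻ v, α (x, v) (Φ (x, v)) ∂lam with hrdef
    have hr_meas : Measurable r := Measurable.lintegral_prod_right hαΦ
    -- rewrite the indicator inside the second term
    have hrw : ∀ (C : Set E) (x v : E),
        {w : E | (Φ (x, w)).1 ∈ C}.indicator (fun w => α (x, w) (Φ (x, w))) v
          = C.indicator (fun _ => (1:ℝ≥0∞)) ((Φ (x, v)).1) * α (x, v) (Φ (x, v)) := by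
      intro C x v
      by_cases h : (Φ (x, v)).1 ∈ C <;>
        simp [Set.indicator_apply, h]
    -- the scalar identity
    have scalar : ∀ z : E × E,
        eU z.1 * (eK z.2 * α z (Φ z))
          = ENNReal.ofReal (min (Real.exp (-H z)) (Real.exp (-H (Φ z)))) := by
      intro z
      simp only [heU, heK, α]
      rw [← ENNReal.ofReal_mul (Real.exp_nonneg _), ← ENNReal.ofReal_mul (Real.exp_nonneg _)]
      congr 1
      have h1 : Real.exp (-U z.1) * Real.exp (-K z.2) = Real.exp (-H z) := by
        rw [← Real.exp_add]; congr 1; simp only [H]; ring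
      rw [← mul_assoc, h1, mul_min_of_nonneg _ _ (Real.exp_nonneg _), mul_one,
        ← Real.exp_add]
      congr 2
      ring
    -- the flow term as an integral over the product space
    have key : ∀ (C D : Set E), MeasurableSet C → MeasurableSet D →
        ∫⁻ x in C, (∫⁻ v, D.indicator (fun _ => (1:ℝ≥0∞)) ((Φ (x, v)).1)
            * α (x, v) (Φ (x, v)) ∂lam) ∂Ppi
          = ∫⁻ z, C.indicator (fun _ => (1:ℝ≥0∞)) z.1
              * D.indicator (fun _ => (1:ℝ≥0∞)) ((Φ z).1)
              * ENNReal.ofReal (min (Real.exp (-H z)) (Real.exp (-H (Φ z)))) ∂(μ.prod μ) := by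
      intro C D hC hD
      set f : E × E → ℝ≥0∞ := fun z =>
        D.indicator (fun _ => (1:ℝ≥0∞)) ((Φ z).1) * α z (Φ z) with hfdef
      have hf : Measurable f :=
        ((measurable_const.indicator hD).comp (measurable_fst.comp hΦ_meas)).mul hαΦ
      set g0 : E × E → ℝ≥0∞ := fun z =>
        C.indicator (fun _ => (1:ℝ≥0∞)) z.1 * (eU z.1 * (eK z.2 * f z)) with hg0def
      have hg0 : Measurable g0 :=
        ((measurable_const.indicator hC).comp measurable_fst).mul
          ((heU_meas.comp measurable_fst).mul ((heK_meas.comp measurable_snd).mul hf))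
      have hlam_step : ∀ x : E,
          (∫⁻ v, f (x, v) ∂lam) = ∫⁻ v, eK v * f (x, v) ∂μ := by
        intro x
        rw [hlam]
        exact lintegral_withDensity_eq_lintegral_mul μ heK_meas
          (show Measurable fun v => f (x, v) from
            hf.comp (measurable_const.prodMk measurable_id))
      have hmeas_inner : Measurable fun x => ∫⁻ v, f (x, v) ∂lam :=
        Measurable.lintegral_prod_right hf
      calc ∫⁻ x in C, (∫⁻ v, f (x, v) ∂lam) ∂Ppi
          = ∫⁻ x, C.indicator (fun x => ∫⁻ v, f (x, v) ∂lam) x ∂Ppi :=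
            (lintegral_indicator hC _).symm
        _ = ∫⁻ x, eU x * C.indicator (fun x => ∫⁻ v, f (x, v) ∂lam) x ∂μ := by
            rw [hPpi]
            exact lintegral_withDensity_eq_lintegral_mul μ heU_meas
              (hmeas_inner.indicator hC)
        _ = ∫⁻ x, ∫⁻ v, g0 (x, v) ∂μ ∂μ := by
            refine lintegral_congr fun x => ?_
            by_cases hx : x ∈ C
            · rw [Set.indicator_of_mem hx, hlam_step x,
                ← lintegral_const_mul' _ _ ENNReal.ofReal_ne_top]
              refine lintegral_congr fun v => ?_
              simp only [g0, Set.indicator_of_mem hx, one_mul, heU]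
            · simp only [Set.indicator_of_notMem hx, mul_zero, g0, zero_mul,
                lintegral_zero]
        _ = ∫⁻ z, g0 z ∂(μ.prod μ) := (lintegral_prod g0 hg0.aemeasurable).symm
        _ = _ := by
            refine lintegral_congr fun z => ?_
            simp only [g0, f]
            calc C.indicator (fun _ => (1:ℝ≥0∞)) z.1
                  * (eU z.1 * (eK z.2 * (D.indicator (fun _ => (1:ℝ≥0∞)) ((Φ z).1)
                    * α z (Φ z))))
                = C.indicator (fun _ => (1:ℝ≥0∞)) z.1
                  * D.indicator (fun _ => (1:ℝ≥0∞)) ((Φ z).1)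
                  * (eU z.1 * (eK z.2 * α z (Φ z))) := by ring
              _ = _ := by rw [scalar z]
    -- symmetry of the flow term via reversibility of κ ∘ Φ
    have key_symm : ∀ (C D : Set E), MeasurableSet C → MeasurableSet D →
        ∫⁻ z, C.indicator (fun _ => (1:ℝ≥0∞)) z.1
            * D.indicator (fun _ => (1:ℝ≥0∞)) ((Φ z).1)
            * ENNReal.ofReal (min (Real.exp (-H z)) (Real.exp (-H (Φ z)))) ∂(μ.prod μ)
        = ∫⁻ z, D.indicator (fun _ => (1:ℝ≥0∞)) z.1
            * C.indicator (fun _ => (1:ℝ≥0∞)) ((Φ z).1)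
            * ENNReal.ofReal (min (Real.exp (-H z)) (Real.exp (-H (Φ z)))) ∂(μ.prod μ) := by
      intro C D hC hD
      set Ψ : E × E → E × E := (fun z : E × E => (z.1, -z.2)) ∘ Φ with hΨdef
      have hΨ_meas : Measurable Ψ := (measurable_fst.prodMk measurable_snd.neg).comp hΦ_meas
      have hHΨ : ∀ z, H (Ψ z) = H (Φ z) := by
        intro z
        simp only [Ψ, H, Function.comp_apply, hK_even]
      have hΨ1 : ∀ z, (Ψ z).1 = (Φ z).1 := fun z => rfl
      set F : (E × E) × (E × E) → ℝ≥0∞ := fun p =>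
        C.indicator (fun _ => (1:ℝ≥0∞)) p.1.1
          * D.indicator (fun _ => (1:ℝ≥0∞)) p.2.1
          * ENNReal.ofReal (min (Real.exp (-H p.1)) (Real.exp (-H p.2))) with hFdef
      have hF : Measurable F := by
        refine (((measurable_const.indicator hC).comp
          (measurable_fst.comp measurable_fst)).mul
          ((measurable_const.indicator hD).comp
            (measurable_fst.comp measurable_snd))).mul ?_
        exact (((hH.comp measurable_fst).neg.exp).min
          ((hH.comp measurable_snd).neg.exp)).ennreal_ofReal
      have h1 : ∫⁻ z, C.indicator (fun _ => (1:ℝ≥0∞)) z.1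
            * D.indicator (fun _ => (1:ℝ≥0∞)) ((Φ z).1)
            * ENNReal.ofReal (min (Real.exp (-H z)) (Real.exp (-H (Φ z)))) ∂(μ.prod μ)
          = ∫⁻ z, F (z, Ψ z) ∂(μ.prod μ) := by
        refine lintegral_congr fun z => ?_
        simp only [F, hΨ1, hHΨ]
      have h2 : ∫⁻ z, F (Ψ z, z) ∂(μ.prod μ)
          = ∫⁻ z, D.indicator (fun _ => (1:ℝ≥0∞)) z.1
            * C.indicator (fun _ => (1:ℝ≥0∞)) ((Φ z).1)
            * ENNReal.ofReal (min (Real.exp (-H z)) (Real.exp (-H (Φ z)))) ∂(μ.prod μ) := by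
        refine lintegral_congr fun z => ?_
        simp only [F, hΨ1, hHΨ, min_comm (Real.exp (-H (Φ z))) (Real.exp (-H z))]
        ring
      rw [h1, lintegral_rev_symm (μ.prod μ) Ψ hΨ_meas hΦ F hF, h2]
    -- the diagonal term
    have diag : ∀ (C D : Set E), MeasurableSet C →
        ∫⁻ x in C, D.indicator (fun _ => (1:ℝ≥0∞)) x * (1 - r x) ∂Ppi
          = ∫⁻ x, (C ∩ D).indicator (fun x => 1 - r x) x ∂Ppi := by
      intro C D hC
      rw [← lintegral_indicator hC]
      refine lintegral_congr fun x => ?_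
      by_cases hxC : x ∈ C <;> by_cases hxD : x ∈ D <;>
        simp [Set.indicator_apply, hxC, hxD]
    -- assemble
    have decomp : ∀ (C D : Set E), MeasurableSet C → MeasurableSet D →
        ∫⁻ x in C, P x D ∂Ppi
          = (∫⁻ x, (C ∩ D).indicator (fun x => 1 - r x) x ∂Ppi)
            + ∫⁻ z, C.indicator (fun _ => (1:ℝ≥0∞)) z.1
                * D.indicator (fun _ => (1:ℝ≥0∞)) ((Φ z).1)
                * ENNReal.ofReal (min (Real.exp (-H z)) (Real.exp (-H (Φ z)))) ∂(μ.prod μ) := by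
      intro C D hC hD
      have step1 : ∫⁻ x in C, P x D ∂Ppi
          = ∫⁻ x in C, (D.indicator (fun _ => (1:ℝ≥0∞)) x * (1 - r x)
            + ∫⁻ v, D.indicator (fun _ => (1:ℝ≥0∞)) ((Φ (x, v)).1)
                * α (x, v) (Φ (x, v)) ∂lam) ∂Ppi := by
        refine lintegral_congr fun x => ?_
        simp only [P]
        congr 1
        exact lintegral_congr fun v => hrw D x v
      rw [step1, lintegral_add_left (f := fun x => D.indicator (fun _ => (1:ℝ≥0∞)) x * (1 - r x))
        (((measurable_const.indicator hD).mul (measurable_const.sub hr_meas))),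
        diag C D hC, key C D hC hD]
    rw [decomp A B hA hB, decomp B A hB hA, Set.inter_comm B A, key_symm A B hA hB]
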